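/- arXiv:2201.02981 — 2 statements merged into one kernel-verified Lean document; each statement's English description precedes it below -/
import Mathlib

section
/- Let f, g : F_2^m → F_2 with f(0)=g(0)=0, and let a ∈ F_2^m. The codeword f+s_a covers the codeword g+s_a if and only if (f+g)^(0) + f̂(a) − ĝ(a) = 2^m. -/
open Finset

/-- Standard inner product on `F_2^m`. -/
def ip {m : ℕ} (w x : Fin m → ZMod 2) : ZMod 2 := ∑ i, w i * x i

/-- Signed Walsh transform `ĥ(w) = Σ_x (-1)^(h(x)+w·x)`. -/
def walshS {m : ℕ} (h : (Fin m → ZMod 2) → ZMod 2) (w : Fin m → ZMod 2) : ℤ :=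
  ∑ x : Fin m → ZMod 2, (-1 : ℤ) ^ ((h x + ip w x).val)

/-- `covers c d` : support containment `Supp(c) ⊆ Supp(d)`, i.e. `c ⪯ d`. -/
def covers {ι : Type*} (c d : ι → ZMod 2) : Prop := ∀ x, c x ≠ 0 → d x ≠ 0

lemma key_iff : ∀ u v w : ZMod 2,
    ((-1:ℤ) ^ ((u+v).val) + (-1:ℤ) ^ ((u+w).val) - (-1:ℤ) ^ ((v+w).val) = 1)
      ↔ (u + w ≠ 0 → v + w ≠ 0) := by decide

lemma key_le : ∀ u v w : ZMod 2,
    (-1:ℤ) ^ ((u+v).val) + (-1:ℤ) ^ ((u+w).val) - (-1:ℤ) ^ ((v+w).val) ≤ 1 := by decide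

lemma ip_zero_left {m : ℕ} (x : Fin m → ZMod 2) : ip 0 x = 0 := by
  simp [ip]

lemma ip_zero_right {m : ℕ} (a : Fin m → ZMod 2) : ip a 0 = 0 := by
  simp [ip]

theorem stmt_6 (m : ℕ) (f g : (Fin m → ZMod 2) → ZMod 2)
    (hf0 : f 0 = 0) (hg0 : g 0 = 0) (a : Fin m → ZMod 2) :
    covers (fun x : {x : Fin m → ZMod 2 // x ≠ 0} => f x.1 + ip a x.1)
           (fun x : {x : Fin m → ZMod 2 // x ≠ 0} => g x.1 + ip a x.1)
      ↔ walshS (f + g) 0 + walshS f a - walshS g a = 2 ^ m := by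
  set T : (Fin m → ZMod 2) → ℤ := fun x =>
    (-1:ℤ) ^ ((f x + g x).val) + (-1:ℤ) ^ ((f x + ip a x).val)
      - (-1:ℤ) ^ ((g x + ip a x).val) with hT
  have hsum : walshS (f + g) 0 + walshS f a - walshS g a
      = ∑ x : Fin m → ZMod 2, T x := by
    simp only [walshS, hT, ← Finset.sum_add_distrib, ← Finset.sum_sub_distrib]
    refine Finset.sum_congr rfl fun x _ => ?_
    simp [ip_zero_left, Pi.add_apply]
  have hcard : ∑ _x : Fin m → ZMod 2, (1:ℤ) = 2 ^ m := by
    simp [Finset.card_univ]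
  have heq : (walshS (f + g) 0 + walshS f a - walshS g a = 2 ^ m)
      ↔ ∀ x : Fin m → ZMod 2, T x = 1 := by
    rw [hsum, ← hcard]
    constructor
    · intro h x
      have := (Finset.sum_eq_sum_iff_of_le (fun i _ => key_le (f i) (g i) (ip a i))).1 h
      exact this x (Finset.mem_univ x)
    · intro h
      exact Finset.sum_congr rfl fun x _ => h x
  rw [heq]
  constructor
  · intro hc x
    by_cases hx : x = 0
    · subst hx
      rw [hT]
      simp [hf0, hg0, ip_zero_right]
    · exact (key_iff (f x) (g x) (ip a x)).2 (hc ⟨x, hx⟩)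
  · intro h x hx
    exact (key_iff (f x.1) (g x.1) (ip a x.1)).1 (h x.1) hx
end

section
/- Let f, g : F_2^m → F_2 with f(0)=g(0)=0, and let a, b ∈ F_2^m be distinct. The codeword f+s_a covers the codeword g+s_b if and only if (f+g)^(a+b) + f̂(a) − ĝ(b) = 2^m. -/
open Finset

lemma sign_add : ∀ u v : ZMod 2,
    (-1 : ℤ) ^ ((u + v).val) = (-1 : ℤ) ^ u.val * (-1 : ℤ) ^ v.val := by decide

lemma sign_cases : ∀ u : ZMod 2, (-1 : ℤ) ^ u.val = 1 ∨ (-1 : ℤ) ^ u.val = -1 := by decide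

lemma signNeZero : ∀ u : ZMod 2, u ≠ 0 ↔ (-1 : ℤ) ^ u.val = -1 := by decide

theorem stmt_7 (m : ℕ) (f g : (Fin m → ZMod 2) → ZMod 2)
    (hf0 : f 0 = 0) (hg0 : g 0 = 0) (a b : Fin m → ZMod 2) (hab : a ≠ b) :
    covers (fun x : {x : Fin m → ZMod 2 // x ≠ 0} => f x.1 + ip a x.1)
           (fun x : {x : Fin m → ZMod 2 // x ≠ 0} => g x.1 + ip b x.1)
      ↔ walshS (f + g) (a + b) + walshS f a - walshS g b = 2 ^ m := by
  classical
  set F : (Fin m → ZMod 2) → ℤ := fun x => (-1 : ℤ) ^ ((f x + ip a x).val) with hF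
  set G : (Fin m → ZMod 2) → ℤ := fun x => (-1 : ℤ) ^ ((g x + ip b x).val) with hG
  have hip : ∀ x, ip (a + b) x = ip a x + ip b x := by
    intro x
    simp [ip, add_mul, Finset.sum_add_distrib]
  have hFG : ∀ x, (-1 : ℤ) ^ (((f + g) x + ip (a + b) x).val) = F x * G x := by
    intro x
    have h : (f + g) x + ip (a + b) x = (f x + ip a x) + (g x + ip b x) := by
      rw [hip]; simp [Pi.add_apply]; ring
    rw [h, sign_add]
  have key : walshS (f + g) (a + b) + walshS f a - walshS g b
      = ∑ x : Fin m → ZMod 2, (F x * G x + F x - G x) := by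
    simp only [walshS, hFG]
    rw [Finset.sum_sub_distrib, Finset.sum_add_distrib]
  have hcard : (Fintype.card (Fin m → ZMod 2) : ℤ) = 2 ^ m := by
    simp [Fintype.card_fun]
  have hF0 : F 0 = 1 := by
    simp [hF, hf0, ip]
  rw [key]
  constructor
  · intro hcov
    have hterm : ∀ x : Fin m → ZMod 2, F x * G x + F x - G x = 1 := by
      intro x
      rcases sign_cases (f x + ip a x) with h1 | h1
      · rw [show F x = 1 from h1]; ring
      · have hFx : F x = -1 := h1
        have hx0 : x ≠ 0 := by
          intro hx; rw [hx, hF0] at hFx; norm_num at hFx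
        have : g x + ip b x ≠ 0 := by
          apply hcov ⟨x, hx0⟩
          exact (signNeZero _).2 h1
        have h2 := (signNeZero _).1 this
        rw [show F x = -1 from h1, show G x = -1 from h2]; ring
    rw [Finset.sum_congr rfl (fun x _ => hterm x), Finset.sum_const, Finset.card_univ]
    simp [hcard]
  · intro hsum
    intro x hx
    by_contra hgx
    have hFx : F x.1 = -1 := (signNeZero _).1 hx
    have hGx : G x.1 = 1 := by
      rcases sign_cases (g x.1 + ip b x.1) with h1 | h1
      · exact h1
      · exfalso
        have hgx' : g x.1 + ip b x.1 = 0 := hgx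
        rw [hgx'] at h1
        norm_num [ZMod.val_zero] at h1
    have hlt : ∑ y : Fin m → ZMod 2, (F y * G y + F y - G y)
        < ∑ _y : Fin m → ZMod 2, (1 : ℤ) := by
      apply Finset.sum_lt_sum
      · intro i _
        rcases sign_cases (f i + ip a i) with h1 | h1 <;>
          rcases sign_cases (g i + ip b i) with h2 | h2 <;>
          rw [show F i = _ from h1, show G i = _ from h2] <;> norm_num
      · refine ⟨x.1, Finset.mem_univ _, ?_⟩
        rw [hFx, hGx]; norm_num
    rw [hsum] at hlt
    rw [Finset.sum_const, Finset.card_univ] at hlt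
    simp [hcard] at hlt
end
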